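/- arXiv:2203.09291 — 2 statements merged into one kernel-verified Lean document; each statement's English description precedes it below -/
import Mathlib

section
/- For N, M ≥ 1, consider the map φ: S_{N+M} → ℝ given by φ(ρ, τ) = ‖τ‖, where (ρ, τ) denotes the decomposition of a point of the sphere of radius √(N+M) in ℝ^{N+M} into its first N and last M coordinates. Then for every r ∈ (0, √(N+M)), the level set φ^{-1}(r) equals S_N(√(N+M−r²)) × S_M(r), and the Jacobian of the differential of φ at any point (ρ,τ) with 0 < ‖τ‖ < √(N+M) equals √((N+M−‖τ‖²)/(N+M)). -/
open MeasureTheory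

/-- For `φ(ρ,τ) = ‖τ‖` on the sphere `S_{N+M}` of radius `√(N+M)` in `ℝ^{N+M}`:
the level set `φ⁻¹(r)` equals `S_N(√(N+M-r²)) × S_M(r)` (identifying points of `ℝ^{N+M}`
with pairs of their first `N` and last `M` coordinates), and the Jacobian of the
differential of `φ` at a point with `0 < ‖τ‖ < √(N+M)` — i.e. the norm of the projection
of the gradient of `φ` onto the tangent space of the sphere — equals
`√((N+M-‖τ‖²)/(N+M))`. -/
theorem stmt11 (N M : ℕ) (hN : 1 ≤ N) (hM : 1 ≤ M)
    (φ : EuclideanSpace ℝ (Fin (N + M)) → ℝ)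
    (hφ : ∀ x, φ x = ‖(WithLp.equiv 2 (Fin M → ℝ)).symm
      (fun i : Fin M => x (Fin.natAdd N i))‖) :
    (∀ r : ℝ, 0 < r → r < Real.sqrt ((N : ℝ) + M) →
      {x : EuclideanSpace ℝ (Fin (N + M)) |
          x ∈ Metric.sphere 0 (Real.sqrt ((N : ℝ) + M)) ∧ φ x = r} =
        {x : EuclideanSpace ℝ (Fin (N + M)) |
          ‖(WithLp.equiv 2 (Fin N → ℝ)).symm (fun i : Fin N => x (Fin.castAdd M i))‖ =
            Real.sqrt ((N : ℝ) + M - r ^ 2) ∧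
          ‖(WithLp.equiv 2 (Fin M → ℝ)).symm (fun i : Fin M => x (Fin.natAdd N i))‖ = r}) ∧
    (∀ x : EuclideanSpace ℝ (Fin (N + M)),
      x ∈ Metric.sphere 0 (Real.sqrt ((N : ℝ) + M)) →
      0 < φ x → φ x < Real.sqrt ((N : ℝ) + M) →
      ‖gradient φ x -
          ((inner ℝ x (gradient φ x) : ℝ) / ((N : ℝ) + M)) • x‖ =
        Real.sqrt (((N : ℝ) + M - (φ x) ^ 2) / ((N : ℝ) + M))) := by
  have hNM : (0:ℝ) < (N:ℝ) + M := by positivity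
  have _dummy : True := trivial
  set A : EuclideanSpace ℝ (Fin (N + M)) → ℝ := fun y => ∑ i : Fin N, y (Fin.castAdd M i) ^ 2 with hA
  set B : EuclideanSpace ℝ (Fin (N + M)) → ℝ := fun y => ∑ i : Fin M, y (Fin.natAdd N i) ^ 2 with hB
  have hAnn : ∀ y, 0 ≤ A y := fun y => Finset.sum_nonneg fun i _ => sq_nonneg _
  have hBnn : ∀ y, 0 ≤ B y := fun y => Finset.sum_nonneg fun i _ => sq_nonneg _
  have hφ' : ∀ y, φ y = Real.sqrt (B y) := by
    intro y
    rw [hφ, EuclideanSpace.norm_eq]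
    simp [Real.norm_eq_abs, sq_abs, hB]
  have hρ : ∀ y : EuclideanSpace ℝ (Fin (N + M)), ‖(WithLp.equiv 2 (Fin N → ℝ)).symm
      (fun i : Fin N => y (Fin.castAdd M i))‖ = Real.sqrt (A y) := by
    intro y
    rw [EuclideanSpace.norm_eq]
    simp [Real.norm_eq_abs, sq_abs, hA]
  have hτ : ∀ y : EuclideanSpace ℝ (Fin (N + M)), ‖(WithLp.equiv 2 (Fin M → ℝ)).symm
      (fun i : Fin M => y (Fin.natAdd N i))‖ = Real.sqrt (B y) := by
    intro y
    rw [EuclideanSpace.norm_eq]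
    simp [Real.norm_eq_abs, sq_abs, hB]
  have hnorm : ∀ y : EuclideanSpace ℝ (Fin (N + M)), ‖y‖ = Real.sqrt (A y + B y) := by
    intro y
    rw [EuclideanSpace.norm_eq, hA, hB, ← Fin.sum_univ_add (f := fun j => y j ^ 2)]
    simp [Real.norm_eq_abs, sq_abs]
  constructor
  · intro r hr hr2
    have hr2' : r ^ 2 < (N:ℝ) + M := by
      have := Real.sq_sqrt hNM.le
      nlinarith [Real.sqrt_nonneg ((N:ℝ) + M)]
    ext x
    simp only [Set.mem_setOf_eq, Metric.mem_sphere, dist_zero_right, hnorm, hρ, hφ' x, hτ x]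
    constructor
    · rintro ⟨h1, h2⟩
      have hBx : B x = r ^ 2 := by rw [← Real.sq_sqrt (hBnn x), h2]
      have hAB : A x + B x = (N:ℝ) + M :=
        (Real.sqrt_inj (by positivity) hNM.le).mp h1
      refine ⟨?_, h2⟩
      congr 1
      linarith
    · rintro ⟨h1, h2⟩
      have hBx : B x = r ^ 2 := by rw [← Real.sq_sqrt (hBnn x), h2]
      have hAx : A x = (N:ℝ) + M - r ^ 2 :=
        (Real.sqrt_inj (hAnn x) (by linarith)).mp h1
      refine ⟨?_, h2⟩
      congr 1
      linarith
  · intro x hx hpos hlt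
    have hBx : B x = (φ x) ^ 2 := by rw [hφ' x, Real.sq_sqrt (hBnn x)]
    have hBpos : 0 < B x := by rw [hBx]; positivity
    have hφne : φ x ≠ 0 := ne_of_gt hpos
    set v : EuclideanSpace ℝ (Fin (N + M)) := (WithLp.equiv 2 (Fin (N + M) → ℝ)).symm
      (fun j => Fin.addCases (fun _ => 0) (fun i => x (Fin.natAdd N i) / φ x) j) with hv
    have hvl : ∀ i : Fin N, v (Fin.castAdd M i) = 0 := by
      intro i; simp [hv, WithLp.equiv_symm_apply, PiLp.toLp_apply]
    have hvr : ∀ i : Fin M, v (Fin.natAdd N i) = x (Fin.natAdd N i) / φ x := by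
      intro i; simp [hv, WithLp.equiv_symm_apply, PiLp.toLp_apply]
    set P : Fin M → (EuclideanSpace ℝ (Fin (N + M)) →L[ℝ] ℝ) :=
      fun i => EuclideanSpace.proj (Fin.natAdd N i) with hP
    have hPy : ∀ i (y : EuclideanSpace ℝ (Fin (N + M))), P i y = y (Fin.natAdd N i) :=
      fun i y => rfl
    have hBd : HasFDerivAt B (∑ i : Fin M,
        (x (Fin.natAdd N i) • P i + x (Fin.natAdd N i) • P i)) x := by
      have h1 : ∀ i ∈ (Finset.univ : Finset (Fin M)), HasFDerivAt
          (fun y : EuclideanSpace ℝ (Fin (N + M)) => P i y * P i y)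
          (x (Fin.natAdd N i) • P i + x (Fin.natAdd N i) • P i) x := by
        intro i _
        exact (P i).hasFDerivAt.mul (P i).hasFDerivAt
      have hBfun : B = fun y => ∑ i : Fin M, P i y * P i y := by
        funext y
        rw [hB]
        exact Finset.sum_congr rfl fun i _ => by rw [hPy, sq]
      rw [hBfun]
      exact HasFDerivAt.fun_sum h1
    have hgrad : HasGradientAt φ v x := by
      rw [hasGradientAt_iff_hasFDerivAt]
      have hfun : φ = fun y => Real.sqrt (B y) := funext hφ'
      rw [hfun]
      convert hBd.sqrt (ne_of_gt hBpos) using 1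
      · rfl
      ext y
      rw [InnerProductSpace.toDual_apply_apply, PiLp.inner_apply]
      simp only [RCLike.inner_apply, starRingEnd_apply, star_trivial]
      rw [Finset.sum_congr rfl fun j _ => mul_comm (y j) (v j)]
      rw [Fin.sum_univ_add (f := fun j => v j * y j)]
      simp only [hvl, hvr, zero_mul, Finset.sum_const_zero, zero_add]
      have hsq : Real.sqrt (B x) = φ x := (hφ' x).symm
      simp only [ContinuousLinearMap.smul_apply, ContinuousLinearMap.sum_apply,
        ContinuousLinearMap.add_apply, hPy, smul_eq_mul, hsq, Finset.mul_sum]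
      refine Finset.sum_congr rfl fun i _ => ?_
      field_simp
      ring
    have hgx : gradient φ x = v := hgrad.gradient
    have hinner : (inner ℝ x v : ℝ) = φ x := by
      rw [PiLp.inner_apply]
      simp only [RCLike.inner_apply, starRingEnd_apply, star_trivial]
      rw [Finset.sum_congr rfl fun j _ => mul_comm (v j) (x j)]
      rw [Fin.sum_univ_add (f := fun j => x j * v j)]
      simp only [hvl, hvr, mul_zero, Finset.sum_const_zero, zero_add]
      have : ∑ i : Fin M, x (Fin.natAdd N i) * (x (Fin.natAdd N i) / φ x)
          = B x / φ x := by
        rw [hB, Finset.sum_div]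
        refine Finset.sum_congr rfl fun i _ => ?_
        ring
      rw [this, hBx]
      field_simp
    have hvnorm : ‖v‖ ^ 2 = 1 := by
      rw [← real_inner_self_eq_norm_sq, PiLp.inner_apply]
      simp only [RCLike.inner_apply, starRingEnd_apply, star_trivial]
      rw [Fin.sum_univ_add (f := fun j => v j * v j)]
      simp only [hvl, hvr, mul_zero, Finset.sum_const_zero, zero_add]
      have : ∑ i : Fin M, (x (Fin.natAdd N i) / φ x) * (x (Fin.natAdd N i) / φ x)
          = B x / φ x ^ 2 := by
        rw [hB, Finset.sum_div]
        refine Finset.sum_congr rfl fun i _ => ?_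
        field_simp
      rw [this, hBx]
      field_simp
    have hxnorm : ‖x‖ ^ 2 = (N : ℝ) + M := by
      rw [mem_sphere_iff_norm, sub_zero] at hx
      rw [hx, Real.sq_sqrt hNM.le]
    rw [hgx, hinner]
    have key : ‖v - (φ x / ((N:ℝ) + M)) • x‖ ^ 2
        = (((N:ℝ) + M - (φ x) ^ 2) / ((N:ℝ) + M)) := by
      rw [norm_sub_sq_real, real_inner_smul_right, norm_smul, real_inner_comm, hinner,
        mul_pow]
      rw [hxnorm, hvnorm]
      rw [Real.norm_eq_abs, sq_abs]
      field_simp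
      ring
    rw [← key, Real.sqrt_sq (norm_nonneg _)]
end

section
/- Fix c ∈ (1/4, 1/2), set s_N = N^c, and for x = (x_p)_{p≥1} with x_p ∈ [1,2], define η_N^x(t) = s_N² Σ_{p≥1} 4^{−p} x_p² t^p for t ∈ [−1,1]. Then for all N, M ≥ 1, all x_p, y_p ∈ [1,2], all R¹, R² ∈ [−1,1], and R = (N·R¹ + M·R²)/(N+M): |η_{N+M}^x(R) − η_N^x(R¹) − η_M^y(R²)| ≤ (2M/(N+M))·s_{N+M}²·Σ_{p≥1} 4^{1−p} p + (s_{N+M}² − s_N²)·Σ_{p≥1} 4^{1−p} + s_M²·Σ_{p≥1} 4^{1−p}; in particular, for N large enough this quantity is at most C·M·(N+M)^{2c−1} + C·M^{2c} for a universal constant C > 0. -/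
open Real

lemma my_abs_pow_sub_pow {a b : ℝ} (ha : |a| ≤ 1) (hb : |b| ≤ 1) (n : ℕ) :
    |a ^ n - b ^ n| ≤ n * |a - b| := by
  induction n with
  | zero => simp
  | succ n ih =>
    have h2 : |a ^ n| ≤ 1 := by rw [abs_pow]; exact pow_le_one₀ (abs_nonneg a) ha
    calc |a ^ (n+1) - b ^ (n+1)| = |a ^ n * (a - b) + (a ^ n - b ^ n) * b| := by ring_nf
      _ ≤ |a ^ n * (a - b)| + |(a ^ n - b ^ n) * b| := abs_add_le _ _
      _ ≤ 1 * |a - b| + (n * |a - b|) * 1 := by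
          rw [abs_mul, abs_mul]
          gcongr
      _ = (↑(n+1) : ℝ) * |a - b| := by push_cast; ring

lemma my_pow_quarter (p : ℕ) : (4 : ℝ) ^ (-(p : ℝ)) = (1/4 : ℝ) ^ p := by
  rw [Real.rpow_neg (by norm_num), Real.rpow_natCast, one_div, inv_pow]

lemma my_pow_quarter' (p : ℕ) : (4 : ℝ) ^ (-((p : ℝ) + 1)) = (1/4 : ℝ) ^ (p+1) := by
  have h : -((p:ℝ)+1) = -(((p+1 : ℕ) : ℝ)) := by push_cast ; ring
  rw [h, my_pow_quarter]

lemma my_sum_geo : Summable (fun p : ℕ => (1/4 : ℝ) ^ p) :=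
  summable_geometric_of_lt_one (by norm_num) (by norm_num)

lemma my_tsum_geo : (∑' p : ℕ, (4:ℝ) ^ (-(p:ℝ))) = 4/3 := by
  rw [tsum_congr my_pow_quarter, tsum_geometric_of_lt_one (by norm_num) (by norm_num)]
  norm_num

lemma my_hasSum_lin : HasSum (fun p : ℕ => (1/4:ℝ)^p * ((p:ℝ)+1)) (16/9) := by
  have h := hasSum_choose_mul_geometric_of_norm_lt_one (𝕜 := ℝ) 1 (r := (1/4:ℝ))
      (by rw [Real.norm_eq_abs, abs_lt]; constructor <;> norm_num)
  have : (1 : ℝ) / ((1 - 1/4)^2) = 16/9 := by norm_num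
  rw [this] at h
  convert h using 2 with p
  case e'_3 => rfl
  simp [Nat.choose_one_right]
  ring

lemma my_sum_lin : Summable (fun p : ℕ => (1/4:ℝ)^p * ((p:ℝ)+1)) := my_hasSum_lin.summable

lemma my_tsum_lin : (∑' p : ℕ, (4:ℝ) ^ (-(p:ℝ)) * ((p:ℝ)+1)) = 16/9 := by
  rw [tsum_congr (fun p => by rw [my_pow_quarter] :
    ∀ p : ℕ, (4:ℝ) ^ (-(p:ℝ)) * ((p:ℝ)+1) = (1/4:ℝ)^p * ((p:ℝ)+1))]
  exact my_hasSum_lin.tsum_eq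

lemma my_sq_rpow {t : ℝ} (ht : 0 ≤ t) (c : ℝ) : (t ^ c) ^ 2 = t ^ (2*c) := by
  rw [← Real.rpow_natCast (t ^ c) 2, ← Real.rpow_mul ht]
  norm_num [mul_comm]

lemma my_rpow_subadd {a b p : ℝ} (ha : 0 ≤ a) (hb : 0 ≤ b) (hp : 0 ≤ p) (hp1 : p ≤ 1) :
    (a + b) ^ p ≤ a ^ p + b ^ p := by
  lift a to NNReal using ha
  lift b to NNReal using hb
  rw [← NNReal.coe_add, ← NNReal.coe_rpow, ← NNReal.coe_rpow, ← NNReal.coe_rpow,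
    ← NNReal.coe_add, NNReal.coe_le_coe]
  exact NNReal.rpow_add_le_add_rpow a b hp hp1

set_option maxHeartbeats 1000000 in
/-- Bound on the covariance difference of the perturbation terms: with `s_N = N^c`,
`η_N^x(t) = s_N² Σ_{p≥1} 4^{-p} x_p² t^p`, `R = (N·R¹ + M·R²)/(N+M)`,
`|η_{N+M}^x(R) - η_N^x(R¹) - η_M^y(R²)|
  ≤ (2M/(N+M))·s_{N+M}²·Σ_{p≥1} 4^{1-p} p + (s_{N+M}² - s_N²)·Σ_{p≥1} 4^{1-p}
    + s_M²·Σ_{p≥1} 4^{1-p}`,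
and for `N` large this is at most `C·M·(N+M)^{2c-1} + C·M^{2c}` for a universal `C > 0`. -/
theorem stmt15 (c : ℝ) (hc1 : 1 / 4 < c) (hc2 : c < 1 / 2)
    (x y : ℕ → ℝ) (hx : ∀ p, x p ∈ Set.Icc (1 : ℝ) 2) (hy : ∀ p, y p ∈ Set.Icc (1 : ℝ) 2)
    (sN : ℕ → ℝ) (hsN : ∀ n : ℕ, sN n = (n : ℝ) ^ c)
    (η : ℕ → (ℕ → ℝ) → ℝ → ℝ)
    (hη : ∀ (n : ℕ) (z : ℕ → ℝ) (t : ℝ),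
      η n z t = (sN n) ^ 2 * ∑' p : ℕ, (4 : ℝ) ^ (-((p : ℝ) + 1)) * (z (p + 1)) ^ 2 * t ^ (p + 1)) :
    (∀ N M : ℕ, 1 ≤ N → 1 ≤ M → ∀ R₁ R₂ : ℝ,
      R₁ ∈ Set.Icc (-1 : ℝ) 1 → R₂ ∈ Set.Icc (-1 : ℝ) 1 →
      |η (N + M) x (((N : ℝ) * R₁ + M * R₂) / ((N : ℝ) + M)) - η N x R₁ - η M y R₂| ≤
        2 * M / ((N : ℝ) + M) * (sN (N + M)) ^ 2 * (∑' p : ℕ, (4 : ℝ) ^ (-(p : ℝ)) * ((p : ℝ) + 1)) +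
        ((sN (N + M)) ^ 2 - (sN N) ^ 2) * (∑' p : ℕ, (4 : ℝ) ^ (-(p : ℝ))) +
        (sN M) ^ 2 * (∑' p : ℕ, (4 : ℝ) ^ (-(p : ℝ)))) ∧
    (∃ C > (0 : ℝ), ∀ M : ℕ, 1 ≤ M → ∃ N₀ : ℕ, ∀ N : ℕ, N₀ ≤ N →
      2 * M / ((N : ℝ) + M) * (sN (N + M)) ^ 2 * (∑' p : ℕ, (4 : ℝ) ^ (-(p : ℝ)) * ((p : ℝ) + 1)) +
        ((sN (N + M)) ^ 2 - (sN N) ^ 2) * (∑' p : ℕ, (4 : ℝ) ^ (-(p : ℝ))) +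
        (sN M) ^ 2 * (∑' p : ℕ, (4 : ℝ) ^ (-(p : ℝ))) ≤
      C * M * ((N : ℝ) + M) ^ (2 * c - 1) + C * (M : ℝ) ^ (2 * c)) := by
  have hc0 : (0:ℝ) ≤ c := by linarith
  constructor
  · intro N M hN hM R₁ R₂ hR₁ hR₂
    obtain ⟨hR₁l, hR₁u⟩ := hR₁
    obtain ⟨hR₂l, hR₂u⟩ := hR₂
    have haR₁ : |R₁| ≤ 1 := abs_le.2 ⟨hR₁l, hR₁u⟩
    have haR₂ : |R₂| ≤ 1 := abs_le.2 ⟨hR₂l, hR₂u⟩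
    have hNp : (0:ℝ) < N := by exact_mod_cast hN
    have hMp : (0:ℝ) < M := by exact_mod_cast hM
    have hNM : (0:ℝ) < (N:ℝ) + M := by linarith
    set R : ℝ := ((N : ℝ) * R₁ + M * R₂) / ((N : ℝ) + M) with hRdef
    have haR : |R| ≤ 1 := by
      rw [hRdef, abs_div, abs_of_pos hNM, div_le_one hNM]
      calc |(N:ℝ) * R₁ + (M:ℝ) * R₂| ≤ |(N:ℝ) * R₁| + |(M:ℝ) * R₂| := abs_add_le _ _
        _ = (N:ℝ) * |R₁| + (M:ℝ) * |R₂| := by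
            rw [abs_mul, abs_mul, abs_of_pos hNp, abs_of_pos hMp]
        _ ≤ (N:ℝ) * 1 + (M:ℝ) * 1 := by gcongr
        _ = (N:ℝ) + M := by ring
    have hRdiff : |R - R₁| ≤ 2 * M / ((N:ℝ) + M) := by
      have he : R - R₁ = ((M:ℝ) * (R₂ - R₁)) / ((N:ℝ) + M) := by
        rw [hRdef]; field_simp; ring
      rw [he, abs_div, abs_of_pos hNM, div_le_div_iff_of_pos_right hNM, abs_mul,
        abs_of_pos hMp]
      have h2 : |R₂ - R₁| ≤ 2 := abs_le.2 ⟨by linarith, by linarith⟩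
      calc (M:ℝ) * |R₂ - R₁| ≤ (M:ℝ) * 2 := by gcongr
        _ = 2 * M := by ring
    -- the summand families
    have hbound : ∀ (z : ℕ → ℝ), (∀ p, z p ∈ Set.Icc (1:ℝ) 2) → ∀ t : ℝ, |t| ≤ 1 →
        ∀ p : ℕ, ‖(4:ℝ)^(-((p:ℝ)+1)) * (z (p+1))^2 * t^(p+1)‖ ≤ (1/4:ℝ)^p := by
      intro z hz t ht p
      obtain ⟨hz1, hz2⟩ := hz (p+1)
      have hz4 : (z (p+1))^2 ≤ 4 := by nlinarith
      have ht1 : |t^(p+1)| ≤ 1 := by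
        rw [abs_pow]; exact pow_le_one₀ (abs_nonneg t) ht
      rw [Real.norm_eq_abs, abs_mul, abs_mul, my_pow_quarter',
        abs_of_nonneg (by positivity : (0:ℝ) ≤ (1/4:ℝ)^(p+1)), abs_of_nonneg (sq_nonneg _)]
      calc (1/4:ℝ)^(p+1) * (z (p+1))^2 * |t^(p+1)| ≤ (1/4:ℝ)^(p+1) * 4 * 1 := by
            gcongr
        _ = (1/4:ℝ)^p := by rw [pow_succ]; ring
    have hsum : ∀ (z : ℕ → ℝ), (∀ p, z p ∈ Set.Icc (1:ℝ) 2) → ∀ t : ℝ, |t| ≤ 1 →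
        Summable (fun p : ℕ => (4:ℝ)^(-((p:ℝ)+1)) * (z (p+1))^2 * t^(p+1)) := by
      intro z hz t ht
      exact Summable.of_norm_bounded my_sum_geo (hbound z hz t ht)
    have SxR := hsum x hx R haR
    have SxR₁ := hsum x hx R₁ haR₁
    have SyR₂ := hsum y hy R₂ haR₂
    have S1 := SxR.mul_left ((sN (N+M))^2)
    have S2 := SxR₁.mul_left ((sN N)^2)
    have S3 := SyR₂.mul_left ((sN M)^2)
    have expand : η (N + M) x R - η N x R₁ - η M y R₂ =
        ∑' p : ℕ, ((sN (N+M))^2 * ((4:ℝ)^(-((p:ℝ)+1)) * (x (p+1))^2 * R^(p+1))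
          - (sN N)^2 * ((4:ℝ)^(-((p:ℝ)+1)) * (x (p+1))^2 * R₁^(p+1))
          - (sN M)^2 * ((4:ℝ)^(-((p:ℝ)+1)) * (y (p+1))^2 * R₂^(p+1))) := by
      rw [hη, hη, hη, ← tsum_mul_left, ← tsum_mul_left, ← tsum_mul_left,
        ← Summable.tsum_sub S1 S2, ← Summable.tsum_sub (S1.sub S2) S3]
    -- nonnegativity facts
    have hs0 : (0:ℝ) ≤ (sN (N+M))^2 := sq_nonneg _
    have hsM0 : (0:ℝ) ≤ (sN M)^2 := sq_nonneg _
    have hsmono : (sN N)^2 ≤ (sN (N+M))^2 := by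
      rw [hsN, hsN]
      have h1 : ((N:ℝ)) ^ c ≤ ((N+M : ℕ):ℝ) ^ c := by
        apply Real.rpow_le_rpow (le_of_lt hNp) _ hc0
        push_cast; linarith
      have h0 : (0:ℝ) ≤ (N:ℝ) ^ c := Real.rpow_nonneg (le_of_lt hNp) c
      nlinarith
    -- termwise bound
    set G : ℕ → ℝ := fun p =>
      (2 * M / ((N:ℝ) + M) * (sN (N+M))^2 * ((1/4:ℝ)^p * ((p:ℝ)+1))
        + ((sN (N+M))^2 - (sN N)^2) * (1/4:ℝ)^p)
        + (sN M)^2 * (1/4:ℝ)^p with hGdef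
    have SG : Summable G :=
      ((my_sum_lin.mul_left _).add (my_sum_geo.mul_left _)).add (my_sum_geo.mul_left _)
    have hterm : ∀ p : ℕ,
        |(sN (N+M))^2 * ((4:ℝ)^(-((p:ℝ)+1)) * (x (p+1))^2 * R^(p+1))
          - (sN N)^2 * ((4:ℝ)^(-((p:ℝ)+1)) * (x (p+1))^2 * R₁^(p+1))
          - (sN M)^2 * ((4:ℝ)^(-((p:ℝ)+1)) * (y (p+1))^2 * R₂^(p+1))| ≤ G p := by
      intro p
      obtain ⟨hx1, hx2⟩ := hx (p+1)
      obtain ⟨hy1, hy2⟩ := hy (p+1)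
      have hx4 : (x (p+1))^2 ≤ 4 := by nlinarith
      have hx0 : (0:ℝ) ≤ (x (p+1))^2 := sq_nonneg _
      have he : (sN (N+M))^2 * ((4:ℝ)^(-((p:ℝ)+1)) * (x (p+1))^2 * R^(p+1))
          - (sN N)^2 * ((4:ℝ)^(-((p:ℝ)+1)) * (x (p+1))^2 * R₁^(p+1))
          - (sN M)^2 * ((4:ℝ)^(-((p:ℝ)+1)) * (y (p+1))^2 * R₂^(p+1))
          = (sN (N+M))^2 * ((4:ℝ)^(-((p:ℝ)+1)) * (x (p+1))^2 * (R^(p+1) - R₁^(p+1)))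
            + ((sN (N+M))^2 - (sN N)^2) * ((4:ℝ)^(-((p:ℝ)+1)) * (x (p+1))^2 * R₁^(p+1))
            - (sN M)^2 * ((4:ℝ)^(-((p:ℝ)+1)) * (y (p+1))^2 * R₂^(p+1)) := by ring
      have hX : |(sN (N+M))^2 * ((4:ℝ)^(-((p:ℝ)+1)) * (x (p+1))^2 * (R^(p+1) - R₁^(p+1)))|
          ≤ 2 * M / ((N:ℝ) + M) * (sN (N+M))^2 * ((1/4:ℝ)^p * ((p:ℝ)+1)) := by
        rw [abs_mul, abs_mul, abs_mul, my_pow_quarter', abs_of_nonneg hs0,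
          abs_of_nonneg (by positivity : (0:ℝ) ≤ (1/4:ℝ)^(p+1)), abs_of_nonneg hx0]
        have hΔ : |R^(p+1) - R₁^(p+1)| ≤ ((p:ℝ)+1) * (2 * M / ((N:ℝ) + M)) := by
          calc |R^(p+1) - R₁^(p+1)| ≤ ((p+1 : ℕ):ℝ) * |R - R₁| :=
                my_abs_pow_sub_pow haR haR₁ (p+1)
            _ ≤ ((p:ℝ)+1) * (2 * M / ((N:ℝ) + M)) := by
                push_cast
                gcongr
        calc (sN (N+M))^2 * ((1/4:ℝ)^(p+1) * (x (p+1))^2 * |R^(p+1) - R₁^(p+1)|)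
            ≤ (sN (N+M))^2 * ((1/4:ℝ)^(p+1) * 4 * (((p:ℝ)+1) * (2 * M / ((N:ℝ) + M)))) := by
              gcongr
          _ = 2 * M / ((N:ℝ) + M) * (sN (N+M))^2 * ((1/4:ℝ)^p * ((p:ℝ)+1)) := by
              rw [pow_succ]; ring
      have hY : |((sN (N+M))^2 - (sN N)^2) * ((4:ℝ)^(-((p:ℝ)+1)) * (x (p+1))^2 * R₁^(p+1))|
          ≤ ((sN (N+M))^2 - (sN N)^2) * (1/4:ℝ)^p := by
        rw [abs_mul, abs_mul, abs_mul, my_pow_quarter',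
          abs_of_nonneg (by linarith : (0:ℝ) ≤ (sN (N+M))^2 - (sN N)^2),
          abs_of_nonneg (by positivity : (0:ℝ) ≤ (1/4:ℝ)^(p+1)), abs_of_nonneg hx0]
        have ht1 : |R₁^(p+1)| ≤ 1 := by
          rw [abs_pow]; exact pow_le_one₀ (abs_nonneg _) haR₁
        calc ((sN (N+M))^2 - (sN N)^2) * ((1/4:ℝ)^(p+1) * (x (p+1))^2 * |R₁^(p+1)|)
            ≤ ((sN (N+M))^2 - (sN N)^2) * ((1/4:ℝ)^(p+1) * 4 * 1) := by
              gcongr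
          _ = ((sN (N+M))^2 - (sN N)^2) * (1/4:ℝ)^p := by rw [pow_succ]; ring
      have hZ : |(sN M)^2 * ((4:ℝ)^(-((p:ℝ)+1)) * (y (p+1))^2 * R₂^(p+1))|
          ≤ (sN M)^2 * (1/4:ℝ)^p := by
        rw [abs_mul, abs_of_nonneg hsM0]
        have := hbound y hy R₂ haR₂ p
        rw [Real.norm_eq_abs] at this
        gcongr
      rw [he, hGdef]
      calc |_ + _ - _| ≤ |(sN (N+M))^2 * ((4:ℝ)^(-((p:ℝ)+1)) * (x (p+1))^2 * (R^(p+1) - R₁^(p+1)))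
            + ((sN (N+M))^2 - (sN N)^2) * ((4:ℝ)^(-((p:ℝ)+1)) * (x (p+1))^2 * R₁^(p+1))|
            + |(sN M)^2 * ((4:ℝ)^(-((p:ℝ)+1)) * (y (p+1))^2 * R₂^(p+1))| := abs_sub _ _
        _ ≤ (|(sN (N+M))^2 * ((4:ℝ)^(-((p:ℝ)+1)) * (x (p+1))^2 * (R^(p+1) - R₁^(p+1)))|
            + |((sN (N+M))^2 - (sN N)^2) * ((4:ℝ)^(-((p:ℝ)+1)) * (x (p+1))^2 * R₁^(p+1))|)
            + |(sN M)^2 * ((4:ℝ)^(-((p:ℝ)+1)) * (y (p+1))^2 * R₂^(p+1))| := by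
              gcongr; exact abs_add_le _ _
        _ ≤ _ := by
              dsimp only
              gcongr
    have SF : Summable (fun p : ℕ =>
        (sN (N+M))^2 * ((4:ℝ)^(-((p:ℝ)+1)) * (x (p+1))^2 * R^(p+1))
          - (sN N)^2 * ((4:ℝ)^(-((p:ℝ)+1)) * (x (p+1))^2 * R₁^(p+1))
          - (sN M)^2 * ((4:ℝ)^(-((p:ℝ)+1)) * (y (p+1))^2 * R₂^(p+1))) := (S1.sub S2).sub S3
    rw [expand]
    calc |∑' p : ℕ, ((sN (N+M))^2 * ((4:ℝ)^(-((p:ℝ)+1)) * (x (p+1))^2 * R^(p+1))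
          - (sN N)^2 * ((4:ℝ)^(-((p:ℝ)+1)) * (x (p+1))^2 * R₁^(p+1))
          - (sN M)^2 * ((4:ℝ)^(-((p:ℝ)+1)) * (y (p+1))^2 * R₂^(p+1)))|
        ≤ ∑' p : ℕ, |(sN (N+M))^2 * ((4:ℝ)^(-((p:ℝ)+1)) * (x (p+1))^2 * R^(p+1))
          - (sN N)^2 * ((4:ℝ)^(-((p:ℝ)+1)) * (x (p+1))^2 * R₁^(p+1))
          - (sN M)^2 * ((4:ℝ)^(-((p:ℝ)+1)) * (y (p+1))^2 * R₂^(p+1))| := by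
          have := norm_tsum_le_tsum_norm (f := fun p : ℕ =>
            (sN (N+M))^2 * ((4:ℝ)^(-((p:ℝ)+1)) * (x (p+1))^2 * R^(p+1))
            - (sN N)^2 * ((4:ℝ)^(-((p:ℝ)+1)) * (x (p+1))^2 * R₁^(p+1))
            - (sN M)^2 * ((4:ℝ)^(-((p:ℝ)+1)) * (y (p+1))^2 * R₂^(p+1))) (by
              simpa [Real.norm_eq_abs] using SF.abs)
          simpa [Real.norm_eq_abs] using this
      _ ≤ ∑' p : ℕ, G p := Summable.tsum_le_tsum hterm SF.abs SG
      _ = 2 * M / ((N:ℝ) + M) * (sN (N+M))^2 * (∑' p : ℕ, (1/4:ℝ)^p * ((p:ℝ)+1))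
          + ((sN (N+M))^2 - (sN N)^2) * (∑' p : ℕ, (1/4:ℝ)^p)
          + (sN M)^2 * (∑' p : ℕ, (1/4:ℝ)^p) := by
          simp only [hGdef]
          rw [Summable.tsum_add ((my_sum_lin.mul_left _).add (my_sum_geo.mul_left _))
            (my_sum_geo.mul_left _), Summable.tsum_add (my_sum_lin.mul_left _) (my_sum_geo.mul_left _),
            tsum_mul_left, tsum_mul_left, tsum_mul_left]
      _ = 2 * M / ((N:ℝ) + M) * (sN (N+M))^2 * (∑' p : ℕ, (4:ℝ)^(-(p:ℝ)) * ((p:ℝ)+1))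
          + ((sN (N+M))^2 - (sN N)^2) * (∑' p : ℕ, (4:ℝ)^(-(p:ℝ)))
          + (sN M)^2 * (∑' p : ℕ, (4:ℝ)^(-(p:ℝ))) := by
          rw [tsum_congr (fun p : ℕ => by rw [my_pow_quarter] :
              ∀ p : ℕ, (4:ℝ)^(-(p:ℝ)) * ((p:ℝ)+1) = (1/4:ℝ)^p * ((p:ℝ)+1)),
            tsum_congr my_pow_quarter]
  · refine ⟨4, by norm_num, fun M hM => ⟨1, fun N hN => ?_⟩⟩
    have hMp : (0:ℝ) < M := by exact_mod_cast hM
    have hNp : (0:ℝ) < N := by exact_mod_cast hN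
    have hNM : (0:ℝ) < (N:ℝ) + M := by linarith
    rw [my_tsum_lin, my_tsum_geo, hsN, hsN, hsN]
    push_cast
    rw [my_sq_rpow (by linarith : (0:ℝ) ≤ (N:ℝ) + M), my_sq_rpow (le_of_lt hNp),
      my_sq_rpow (le_of_lt hMp)]
    have h1 : ((N:ℝ) + M) ^ (2*c) - (N:ℝ) ^ (2*c) ≤ (M:ℝ) ^ (2*c) := by
      have := my_rpow_subadd (le_of_lt hNp) (le_of_lt hMp)
        (by linarith : (0:ℝ) ≤ 2*c) (by linarith : 2*c ≤ 1)
      linarith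
    have h2 : ((N:ℝ) + M) ^ (2*c - 1) = ((N:ℝ) + M) ^ (2*c) / ((N:ℝ) + M) := by
      rw [Real.rpow_sub hNM, Real.rpow_one]
    rw [h2]
    have hD : (0:ℝ) ≤ (M:ℝ) * (((N:ℝ) + M) ^ (2*c) / ((N:ℝ) + M)) := by positivity
    have hM2c : (0:ℝ) ≤ (M:ℝ) ^ (2*c) := by positivity
    have h3 : 2 * (M:ℝ) / ((N:ℝ) + M) * (((N:ℝ) + M) ^ (2*c)) * (16/9)
        = (32/9) * ((M:ℝ) * (((N:ℝ) + M) ^ (2*c) / ((N:ℝ) + M))) := by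
      field_simp; ring
    rw [h3]
    nlinarith [hD, hM2c, h1]
end
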